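/- Let n ≥ 2 and let p₁, p₂ ∈ ℂ[x] with p₁(0) ≠ 0, p₂(0) ≠ 0. Suppose there exist λ, ε ∈ ℂ* such that p₂(x) ≡ ε·p₁(λx) mod x^{n-1}, and choose μ ∈ ℂ* with ε = μ⁶λ. Then the map (x,y,z,t) ↦ (λx, λ^{-n}μ^{-6}y + λ^{-n}x^{-(n-1)}(μ^{-6}p₂(x) - λ·p₁(λx)), μ^{-3}z, μ^{-2}t) is a well-defined polynomial automorphism of ℂ⁴ mapping the hypersurface {xⁿy + z² + t³ + x·p₂(x) = 0} isomorphically onto {xⁿy + z² + t³ + x·p₁(x) = 0}. -/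

import Mathlib

open Polynomial

/-- If `p₂(x) ≡ ε·p₁(λx) mod x^{n-1}` with `ε = μ⁶·l ≠ 0`, then the map
`(x,y,z,t) ↦ (l·x, l^{-n}μ^{-6}·y + l^{-n}·x^{-(n-1)}(μ^{-6}p₂(x) - l·p₁(lx)), μ^{-3}z, μ^{-2}t)`
is a well-defined polynomial automorphism of `ℂ⁴` (its inverse is again polynomial)
mapping `{xⁿy + z² + t³ + x·p₂(x) = 0}` isomorphically onto
`{xⁿy + z² + t³ + x·p₁(x) = 0}`. -/
theorem stmt3 (n : ℕ) (hn : 2 ≤ n) (p₁ p₂ : Polynomial ℂ)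
    (hp₁ : p₁.eval 0 ≠ 0) (hp₂ : p₂.eval 0 ≠ 0)
    (l μ : ℂ) (hl : l ≠ 0) (hμ : μ ≠ 0)
    (hcong : (X : Polynomial ℂ) ^ (n - 1) ∣ p₂ - C (μ ^ 6 * l) * p₁.comp (C l * X)) :
    ∃ r : Polynomial ℂ,
      C (μ⁻¹ ^ 6) * p₂ - C l * p₁.comp (C l * X) = X ^ (n - 1) * r ∧
      ∀ F : (Fin 4 → ℂ) → Fin 4 → ℂ,
        (∀ a : Fin 4 → ℂ,
            F a = ![l * a 0, l⁻¹ ^ n * μ⁻¹ ^ 6 * a 1 + l⁻¹ ^ n * r.eval (a 0),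
              μ⁻¹ ^ 3 * a 2, μ⁻¹ ^ 2 * a 3]) →
          Function.Bijective F ∧
          (∃ G : Fin 4 → MvPolynomial (Fin 4) ℂ,
            ∀ (a : Fin 4 → ℂ) (i : Fin 4), MvPolynomial.eval (F a) (G i) = a i) ∧
          (∀ a : Fin 4 → ℂ,
            a 0 ^ n * a 1 + a 2 ^ 2 + a 3 ^ 3 + a 0 * p₂.eval (a 0) = 0 ↔
            (F a 0) ^ n * F a 1 + (F a 2) ^ 2 + (F a 3) ^ 3 + F a 0 * p₁.eval (F a 0) = 0) := by
  obtain ⟨q, hq⟩ := hcong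
  refine ⟨C (μ⁻¹ ^ 6) * q, ?_, ?_⟩
  · have h1 : C (μ⁻¹ ^ 6) * (p₂ - C (μ ^ 6 * l) * p₁.comp (C l * X)) =
        C (μ⁻¹ ^ 6) * p₂ - C l * p₁.comp (C l * X) := by
      rw [mul_sub, ← mul_assoc, ← C_mul]
      congr 2
      field_simp
    rw [← h1, hq]; ring
  intro F hF
  set r := C (μ⁻¹ ^ 6) * q with hr
  have hrdef : C (μ⁻¹ ^ 6) * p₂ - C l * p₁.comp (C l * X) = X ^ (n - 1) * r := by
    have h1 : C (μ⁻¹ ^ 6) * (p₂ - C (μ ^ 6 * l) * p₁.comp (C l * X)) =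
        C (μ⁻¹ ^ 6) * p₂ - C l * p₁.comp (C l * X) := by
      rw [mul_sub, ← mul_assoc, ← C_mul]
      congr 2
      field_simp
    rw [← h1, hq, hr]; ring
  -- key evaluated identity
  have key : ∀ x : ℂ, μ⁻¹ ^ 6 * p₂.eval x - l * p₁.eval (l * x) =
      x ^ (n - 1) * r.eval x := by
    intro x
    have := congrArg (eval x) hrdef
    simpa [eval_comp] using this
  have hF0 : ∀ a : Fin 4 → ℂ, F a 0 = l * a 0 := by intro a; rw [hF]; simp
  have hF1 : ∀ a : Fin 4 → ℂ, F a 1 = l⁻¹ ^ n * μ⁻¹ ^ 6 * a 1 + l⁻¹ ^ n * r.eval (a 0) := by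
    intro a; rw [hF]; simp
  have hF2 : ∀ a : Fin 4 → ℂ, F a 2 = μ⁻¹ ^ 3 * a 2 := by intro a; rw [hF]; simp
  have hF3 : ∀ a : Fin 4 → ℂ, F a 3 = μ⁻¹ ^ 2 * a 3 := by intro a; rw [hF]; simp
  -- explicit inverse
  set Ginv : (Fin 4 → ℂ) → Fin 4 → ℂ := fun b =>
    ![l⁻¹ * b 0, μ ^ 6 * l ^ n * b 1 - μ ^ 6 * r.eval (l⁻¹ * b 0), μ ^ 3 * b 2, μ ^ 2 * b 3]
    with hGinv
  have hleft : Function.LeftInverse Ginv F := by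
    intro a
    funext i
    fin_cases i <;>
      simp [hGinv, hF0 a, hF1 a, hF2 a, hF3 a] <;> field_simp <;> ring
  have hright : Function.RightInverse Ginv F := by
    intro b
    funext i
    fin_cases i <;>
      simp [hF, hGinv] <;>
        field_simp <;> ring
  refine ⟨⟨hleft.injective, hright.surjective⟩, ?_, ?_⟩
  · -- polynomial inverse
    refine ⟨![MvPolynomial.C l⁻¹ * MvPolynomial.X 0,
        MvPolynomial.C (μ ^ 6 * l ^ n) * MvPolynomial.X 1 -
          MvPolynomial.C (μ ^ 6) *
            Polynomial.aeval (MvPolynomial.C l⁻¹ * MvPolynomial.X 0) r,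
        MvPolynomial.C (μ ^ 3) * MvPolynomial.X 2,
        MvPolynomial.C (μ ^ 2) * MvPolynomial.X 3], ?_⟩
    intro a i
    have hcomp : (MvPolynomial.eval (F a)).comp
        (algebraMap ℂ (MvPolynomial (Fin 4) ℂ)) = RingHom.id ℂ := by
      ext c; simp [MvPolynomial.algebraMap_eq]
    have haev : (MvPolynomial.eval (F a))
        (Polynomial.aeval (MvPolynomial.C l⁻¹ * MvPolynomial.X 0) r) =
        r.eval (l⁻¹ * F a 0) := by
      rw [Polynomial.aeval_def, Polynomial.hom_eval₂, hcomp]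
      simp
    fin_cases i <;>
      simp [hF0 a, hF1 a, hF2 a, hF3 a, haev] <;> field_simp <;> ring
  · intro a
    have hkey := key (a 0)
    have hlinv : l⁻¹ ^ n * l ^ n = 1 := by
      rw [← mul_pow]; simp [hl]
    have hpow : a 0 ^ n = a 0 * a 0 ^ (n - 1) := by
      rw [← pow_succ']; congr 1; omega
    have hmain : (F a 0) ^ n * F a 1 + (F a 2) ^ 2 + (F a 3) ^ 3 + F a 0 * p₁.eval (F a 0) =
        μ⁻¹ ^ 6 * (a 0 ^ n * a 1 + a 2 ^ 2 + a 3 ^ 3 + a 0 * p₂.eval (a 0)) := by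
      rw [hF0 a, hF1 a, hF2 a, hF3 a]
      linear_combination (-(a 0)) * hkey +
        (a 0 ^ n * (μ⁻¹ ^ 6 * a 1 + r.eval (a 0))) * hlinv +
        (r.eval (a 0)) * hpow
    rw [hmain]
    constructor
    · intro h; rw [h, mul_zero]
    · intro h
      rcases mul_eq_zero.mp h with h | h
      · exact absurd h (pow_ne_zero _ (inv_ne_zero hμ))
      · exact h
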